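/- Let A be the SARX companion matrix with h^n ≠ 0. Then the minimal polynomial of A equals its characteristic polynomial, and both equal z^{n_u} (z^{n_y} - Σ_{i=1}^{n_y} h^i z^{n_y - i}). -/

import Mathlib

/-- The companion-like matrix of a SISO (S)ARX system of type `(ny, nu)` with coefficient
row `h` (0-based indexing: `h i` corresponds to `h^{i+1}` in the paper):
`A e_j = h^j e_1 + e_{j+1}` for `j ∈ {1,...,n-1} \\ {n_y}`, `A e_{n_y} = h^{n_y} e_1`,
`A e_n = h^n e_1`, where `n = n_y + n_u`. -/
def sarxCompanion (ny nu : ℕ) (h : Fin (ny + nu) → ℝ) :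
    Matrix (Fin (ny + nu)) (Fin (ny + nu)) ℝ :=
  Matrix.of fun i k =>
    (if (i : ℕ) = 0 then h k else 0) +
    (if (i : ℕ) = (k : ℕ) + 1 ∧ (k : ℕ) + 1 ≠ ny then 1 else 0)

/-- The subspace `X1 = span{e_1, ..., e_{n_y}}`. -/
def sarxX1 (ny nu : ℕ) : Submodule ℝ (Fin (ny + nu) → ℝ) :=
  Submodule.span ℝ {v : Fin (ny + nu) → ℝ | ∃ i : Fin (ny + nu), (i : ℕ) < ny ∧ v = Pi.single i 1}

namespace SarxAux
open Polynomial Matrix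

variable {ny nu : ℕ}

def ee {n : ℕ} (j : Fin n) : Fin n → ℝ := Pi.single j 1

def F (h : Fin (ny + nu) → ℝ) : Module.End ℝ (Fin (ny + nu) → ℝ) :=
  Matrix.mulVecLin (sarxCompanion ny nu h)ᵀ

lemma F_apply_ee (h : Fin (ny + nu) → ℝ) (j : Fin (ny + nu)) :
    F h (ee j) = fun i => sarxCompanion ny nu h j i := by
  funext i
  simp [F, ee, Matrix.mulVecLin, Matrix.mulVec_single, Matrix.transpose_apply]

lemma F_e0 (h : Fin (ny + nu) → ℝ) (j : Fin (ny + nu)) (hj : (j : ℕ) = 0) :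
    F h (ee j) = h := by
  rw [F_apply_ee]
  funext i
  simp [sarxCompanion, hj]

lemma F_eny (h : Fin (ny + nu) → ℝ) (hny : 1 ≤ ny) (j : Fin (ny + nu)) (hj : (j : ℕ) = ny) :
    F h (ee j) = 0 := by
  rw [F_apply_ee]
  funext i
  simp only [sarxCompanion, Matrix.of_apply]
  rw [if_neg (by omega), if_neg (by rintro ⟨h1, h2⟩; omega)]
  simp

lemma F_succ (h : Fin (ny + nu) → ℝ) (j k : Fin (ny + nu))
    (hjk : (j : ℕ) = (k : ℕ) + 1) (hk : (k : ℕ) + 1 ≠ ny) :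
    F h (ee j) = ee k := by
  rw [F_apply_ee]
  funext i
  simp only [sarxCompanion, Matrix.of_apply]
  rw [if_neg (by omega)]
  by_cases hik : i = k
  · subst hik
    rw [if_pos ⟨hjk, hk⟩]
    simp [ee]
  · rw [if_neg (by rintro ⟨h1, h2⟩; exact hik (Fin.ext (by omega)))]
    simp [ee, Pi.single_apply, hik]

section Orbit

variable (h : Fin (ny + nu) → ℝ)

lemma orbit_low (m : ℕ) (hm : m < ny) :
    ((F h) ^ m) (ee ⟨ny - 1, by omega⟩) = ee ⟨ny - 1 - m, by omega⟩ := by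
  induction m with
  | zero => simp
  | succ m ih =>
    rw [pow_succ', Module.End.mul_apply, ih (by omega)]
    exact F_succ h _ _ (by simp; omega) (by simp; omega)

lemma orbit_ny (hny : 1 ≤ ny) : ((F h) ^ ny) (ee ⟨ny - 1, by omega⟩) = h := by
  have key : (F h) ^ ny = F h * (F h) ^ (ny - 1) := by
    rw [← pow_succ', Nat.sub_add_cancel hny]
  rw [key, Module.End.mul_apply, orbit_low h (ny - 1) (by omega)]
  exact F_e0 h _ (by simp)

/-- the subspace spanned by `e_ny, ..., e_{n-1}` -/
def Y : Submodule ℝ (Fin (ny + nu) → ℝ) :=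
  Submodule.span ℝ {v | ∃ i : Fin (ny + nu), ny ≤ (i : ℕ) ∧ v = ee i}

lemma Y_inv (hny : 1 ≤ ny) : ∀ v ∈ Y (ny := ny) (nu := nu), F h v ∈ Y := by
  intro v hv
  induction hv using Submodule.span_induction with
  | mem x hx =>
    obtain ⟨i, hi, rfl⟩ := hx
    by_cases hieq : (i : ℕ) = ny
    · rw [F_eny h hny i hieq]; exact (Y).zero_mem
    · have hi1 : ny + 1 ≤ (i : ℕ) := by omega
      rw [F_succ h i ⟨(i : ℕ) - 1, by omega⟩ (by simp; omega) (by simp; omega)]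
      exact Submodule.subset_span ⟨⟨(i:ℕ)-1, by omega⟩, by simp; omega, rfl⟩
  | zero => simp
  | add x y _ _ hx hy => rw [LinearMap.map_add]; exact (Y).add_mem hx hy
  | smul a x _ hx => rw [LinearMap.map_smul]; exact (Y).smul_mem a hx

lemma Y_nil_ee (hny : 1 ≤ ny) : ∀ t : ℕ, ∀ i : Fin (ny + nu), (i : ℕ) = ny + t →
    ((F h) ^ (t + 1)) (ee i) = 0 := by
  intro t
  induction t with
  | zero =>
    intro i hi
    rw [pow_one, F_eny h hny i hi]
  | succ t ih =>
    intro i hi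
    rw [pow_succ, Module.End.mul_apply,
      F_succ h i ⟨ny + t, by omega⟩ (by simp; omega) (by simp; omega)]
    exact ih _ (by simp)

lemma Y_nil (hny : 1 ≤ ny) : ∀ v ∈ Y (ny := ny) (nu := nu), ((F h) ^ nu) v = 0 := by
  intro v hv
  induction hv using Submodule.span_induction with
  | mem x hx =>
    obtain ⟨i, hi, rfl⟩ := hx
    have hlt : (i : ℕ) - ny < nu := by omega
    have key : (F h) ^ nu = (F h) ^ (nu - ((i:ℕ) - ny + 1)) * (F h) ^ ((i:ℕ) - ny + 1) := by
      rw [← pow_add]; congr 1; omega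
    rw [key, Module.End.mul_apply, Y_nil_ee h hny _ i (by omega), map_zero]
  | zero => simp
  | add x y _ _ hx hy => rw [LinearMap.map_add, hx, hy, add_zero]
  | smul a x _ hx => rw [LinearMap.map_smul, hx, smul_zero]


/-- helper basis vectors indexed by ℕ -/
noncomputable def gv (ny nu : ℕ) (m : ℕ) : Fin (ny + nu) → ℝ :=
  if hm : ny + m < ny + nu then ee ⟨ny + m, hm⟩ else 0

noncomputable def cv (h : Fin (ny + nu) → ℝ) (m : ℕ) : ℝ :=
  if hm : m < ny + nu then h ⟨m, hm⟩ else 0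

noncomputable def qpoly (ny nu : ℕ) (h : Fin (ny + nu) → ℝ) : Polynomial ℝ :=
  X ^ ny - ∑ i : Fin ny, C (h (Fin.castAdd nu i)) * X ^ (ny - 1 - (i : ℕ))

lemma aeval_q_apply (v : Fin (ny + nu) → ℝ) :
    (aeval (F h) (qpoly ny nu h)) v =
      ((F h) ^ ny) v - ∑ i : Fin ny, h (Fin.castAdd nu i) • (((F h) ^ (ny - 1 - (i : ℕ))) v) := by
  simp only [qpoly, map_sub, map_sum, _root_.map_mul, aeval_X_pow, aeval_C,
    Algebra.algebraMap_eq_smul_one, smul_mul_assoc, one_mul,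
    LinearMap.sub_apply, LinearMap.coe_sum, Finset.sum_apply, LinearMap.smul_apply]

lemma h_expand : h = ∑ j : Fin (ny + nu), h j • ee j := by
  funext k
  rw [Finset.sum_apply]
  simp [ee, Pi.single_apply, eq_comm]

lemma qF_val (hny : 1 ≤ ny) : (aeval (F h) (qpoly ny nu h)) (ee ⟨ny - 1, by omega⟩) =
    ∑ i ∈ Finset.range nu, cv h (ny + i) • gv ny nu i := by
  rw [aeval_q_apply, orbit_ny h hny]
  have hsum : ∀ i : Fin ny,
      h (Fin.castAdd nu i) • (((F h) ^ (ny - 1 - (i : ℕ))) (ee ⟨ny - 1, by omega⟩))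
        = h (Fin.castAdd nu i) • ee (Fin.castAdd nu i) := by
    intro i
    rw [orbit_low h (ny - 1 - (i : ℕ)) (by omega)]
    congr 1
    apply congrArg
    apply Fin.ext
    simp [Fin.castAdd]
    omega
  rw [Finset.sum_congr rfl (fun i _ => hsum i)]
  rw [sub_eq_iff_eq_add]
  have key : h = (∑ i : Fin ny, h (Fin.castAdd nu i) • ee (Fin.castAdd nu i))
      + ∑ i : Fin nu, h (Fin.natAdd ny i) • ee (Fin.natAdd ny i) :=
    (h_expand h).trans (Fin.sum_univ_add (f := fun j : Fin (ny + nu) => h j • ee j))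
  refine key.trans ?_
  have hBC : (∑ i : Fin nu, h (Fin.natAdd ny i) • ee (Fin.natAdd ny i))
      = ∑ i ∈ Finset.range nu, cv h (ny + i) • gv ny nu i := by
    rw [← Fin.sum_univ_eq_sum_range (fun m => cv h (ny + m) • gv ny nu m) nu]
    apply Finset.sum_congr rfl
    intro i _
    have h1 : cv h (ny + (i : ℕ)) = h (Fin.natAdd ny i) := by
      rw [cv, dif_pos (by omega)]
      congr 1
    have h2 : gv ny nu (i : ℕ) = ee (Fin.natAdd ny i) := by
      rw [gv, dif_pos (by omega)]
      congr 1
    rw [h1, h2]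
  rw [hBC]
  exact add_comm _ _

lemma qF_mem_Y (hny : 1 ≤ ny) : (aeval (F h) (qpoly ny nu h)) (ee ⟨ny - 1, by omega⟩) ∈ Y (ny := ny) (nu := nu) := by
  rw [qF_val h hny]
  apply Submodule.sum_mem
  intro i hi
  apply Submodule.smul_mem
  rw [gv, dif_pos (by simp at hi; omega)]
  exact Submodule.subset_span ⟨_, by simp, rfl⟩

lemma qF_comm_pow (m : ℕ) (v : Fin (ny + nu) → ℝ) :
    (aeval (F h) (qpoly ny nu h)) (((F h) ^ m) v)
      = ((F h) ^ m) ((aeval (F h) (qpoly ny nu h)) v) := by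
  have hx : (F h) ^ m = aeval (F h) ((X : Polynomial ℝ) ^ m) := by simp
  have : aeval (F h) (qpoly ny nu h) * (F h) ^ m = (F h) ^ m * aeval (F h) (qpoly ny nu h) := by
    rw [hx, ← _root_.map_mul, ← _root_.map_mul, mul_comm]
  calc (aeval (F h) (qpoly ny nu h)) (((F h) ^ m) v)
      = (aeval (F h) (qpoly ny nu h) * (F h) ^ m) v := rfl
    _ = ((F h) ^ m * aeval (F h) (qpoly ny nu h)) v := by rw [this]
    _ = _ := rfl

lemma Y_inv_pow (hny : 1 ≤ ny) (m : ℕ) : ∀ v ∈ Y (ny := ny) (nu := nu), ((F h) ^ m) v ∈ Y := by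
  induction m with
  | zero => intro v hv; simpa using hv
  | succ m ih =>
    intro v hv
    rw [pow_succ, Module.End.mul_apply]
    exact ih _ (Y_inv h hny v hv)

lemma qF_ee_mem_Y (hny : 1 ≤ ny) (j : Fin (ny + nu)) :
    (aeval (F h) (qpoly ny nu h)) (ee j) ∈ Y (ny := ny) (nu := nu) := by
  by_cases hj : (j : ℕ) < ny
  · have : ee j = ((F h) ^ (ny - 1 - (j : ℕ))) (ee ⟨ny - 1, by omega⟩) := by
      rw [orbit_low h _ (by omega)]
      apply congrArg; apply Fin.ext; simp; omega
    rw [this, qF_comm_pow]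
    exact Y_inv_pow h hny _ _ (qF_mem_Y h hny)
  · have hjY : ee j ∈ Y (ny := ny) (nu := nu) :=
      Submodule.subset_span ⟨j, by omega, rfl⟩
    rw [aeval_q_apply]
    apply Submodule.sub_mem
    · exact Y_inv_pow h hny _ _ hjY
    · exact Submodule.sum_mem _ fun i _ => Submodule.smul_mem _ _ (Y_inv_pow h hny _ _ hjY)

lemma pF_zero (hny : 1 ≤ ny) : aeval (F h) (X ^ nu * qpoly ny nu h) = 0 := by
  apply Module.Basis.ext (Pi.basisFun ℝ (Fin (ny + nu)))
  intro j
  rw [Pi.basisFun_apply]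
  show (aeval (F h) (X ^ nu * qpoly ny nu h)) (ee j) = 0
  rw [_root_.map_mul, aeval_X_pow, Module.End.mul_apply]
  rw [Y_nil h hny _ (qF_ee_mem_Y h hny j)]


lemma F_gv_zero (hny : 1 ≤ ny) (hnu : 1 ≤ nu) : F h (gv ny nu 0) = 0 := by
  rw [gv, dif_pos (by omega)]
  exact F_eny h hny _ (by simp)

lemma F_gv_succ (hny : 1 ≤ ny) (m : ℕ) (hm : m + 1 < nu) :
    F h (gv ny nu (m + 1)) = gv ny nu m := by
  rw [gv, dif_pos (by omega), gv, dif_pos (by omega)]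
  exact F_succ h _ _ (by simp; omega) (by simp; omega)

lemma wval (hny : 1 ≤ ny) : ∀ j, j ≤ nu →
    ((F h) ^ j) ((aeval (F h) (qpoly ny nu h)) (ee ⟨ny - 1, by omega⟩))
      = ∑ i ∈ Finset.range (nu - j), cv h (ny + i + j) • gv ny nu i := by
  intro j
  induction j with
  | zero =>
    intro _
    rw [pow_zero, Module.End.one_apply, qF_val h hny]
    simp
  | succ j ih =>
    intro hj
    rw [pow_succ', Module.End.mul_apply, ih (by omega)]
    have hsplit : nu - j = (nu - (j + 1)) + 1 := by omega
    rw [hsplit, Finset.sum_range_succ', map_add, map_sum]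
    have hterm : ∀ i ∈ Finset.range (nu - (j + 1)),
        F h (cv h (ny + (i + 1) + j) • gv ny nu (i + 1))
          = cv h (ny + i + (j + 1)) • gv ny nu i := by
      intro i hi
      simp only [Finset.mem_range] at hi
      rw [LinearMap.map_smul, F_gv_succ h hny i (by omega)]
      congr 2
      omega
    rw [Finset.sum_congr rfl hterm, LinearMap.map_smul, F_gv_zero h hny (by omega),
      smul_zero, add_zero]

/-- the cyclic subspace generated by a vector -/
def Wspan (h : Fin (ny + nu) → ℝ) (e₀ : Fin (ny + nu) → ℝ) : Submodule ℝ (Fin (ny + nu) → ℝ) :=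
  Submodule.span ℝ (Set.range fun k : ℕ => ((F h) ^ k) e₀)

lemma aeval_mem_W (e₀ : Fin (ny + nu) → ℝ) (p : Polynomial ℝ) :
    (aeval (F h) p) e₀ ∈ Wspan h e₀ := by
  induction p using Polynomial.induction_on' with
  | add p q hp hq =>
    rw [map_add, LinearMap.add_apply]
    exact Submodule.add_mem _ hp hq
  | monomial n a =>
    rw [aeval_monomial, Algebra.algebraMap_eq_smul_one, smul_mul_assoc, one_mul,
      LinearMap.smul_apply]
    exact Submodule.smul_mem _ _ (Submodule.subset_span ⟨n, rfl⟩)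

lemma pow_mem_W (e₀ : Fin (ny + nu) → ℝ) (k : ℕ) : ((F h) ^ k) e₀ ∈ Wspan h e₀ :=
  Submodule.subset_span ⟨k, rfl⟩

lemma gv_mem_W (hny : 1 ≤ ny) (hnu : 1 ≤ nu) (hz : h ⟨ny + nu - 1, Nat.sub_one_lt (by omega)⟩ ≠ 0) :
    ∀ t, t < nu → gv ny nu t ∈ Wspan h (ee ⟨ny - 1, by omega⟩) := by
  intro t
  induction t using Nat.strong_induction_on with
  | _ t ih =>
    intro ht
    have hj : nu - 1 - t ≤ nu := by omega
    have hw : ((F h) ^ (nu - 1 - t)) ((aeval (F h) (qpoly ny nu h)) (ee ⟨ny - 1, by omega⟩))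
        ∈ Wspan h (ee ⟨ny - 1, by omega⟩) := by
      have : ((F h) ^ (nu - 1 - t)) ((aeval (F h) (qpoly ny nu h)) (ee ⟨ny - 1, by omega⟩))
          = (aeval (F h) ((X : Polynomial ℝ) ^ (nu - 1 - t) * qpoly ny nu h)) (ee ⟨ny - 1, by omega⟩) := by
        rw [_root_.map_mul, aeval_X_pow, Module.End.mul_apply]
      rw [this]
      exact aeval_mem_W h _ _
    rw [wval h hny _ hj] at hw
    have hcnt : nu - (nu - 1 - t) = t + 1 := by omega
    rw [hcnt, Finset.sum_range_succ] at hw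
    have hcval : cv h (ny + t + (nu - 1 - t)) = h ⟨ny + nu - 1, Nat.sub_one_lt (by omega)⟩ := by
      rw [cv, dif_pos (by omega)]
      congr 1
      apply Fin.ext
      simp
      omega
    rw [hcval] at hw
    have hsum : ∑ i ∈ Finset.range t, cv h (ny + i + (nu - 1 - t)) • gv ny nu i
        ∈ Wspan h (ee ⟨ny - 1, by omega⟩) := by
      apply Submodule.sum_mem
      intro i hi
      simp only [Finset.mem_range] at hi
      exact Submodule.smul_mem _ _ (ih i hi (by omega))
    have hgt : h ⟨ny + nu - 1, Nat.sub_one_lt (by omega)⟩ • gv ny nu t ∈ Wspan h (ee ⟨ny - 1, by omega⟩) := by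
      have := Submodule.sub_mem _ hw hsum
      simpa using this
    have := Submodule.smul_mem _ (h ⟨ny + nu - 1, Nat.sub_one_lt (by omega)⟩)⁻¹ hgt
    rwa [smul_smul, inv_mul_cancel₀ hz, one_smul] at this

lemma W_top (hny : 1 ≤ ny) (hnu : 1 ≤ nu) (hz : h ⟨ny + nu - 1, Nat.sub_one_lt (by omega)⟩ ≠ 0) :
    Wspan h (ee ⟨ny - 1, by omega⟩) = ⊤ := by
  rw [eq_top_iff, ← (Pi.basisFun ℝ (Fin (ny + nu))).span_eq]
  apply Submodule.span_le.mpr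
  rintro _ ⟨j, rfl⟩
  rw [Pi.basisFun_apply]
  show ee j ∈ _
  by_cases hj : (j : ℕ) < ny
  · have : ee j = ((F h) ^ (ny - 1 - (j : ℕ))) (ee ⟨ny - 1, by omega⟩) := by
      rw [orbit_low h _ (by omega)]
      apply congrArg; apply Fin.ext; simp; omega
    rw [this]
    exact pow_mem_W h _ _
  · have : ee j = gv ny nu ((j : ℕ) - ny) := by
      rw [gv, dif_pos (by omega)]
      apply congrArg; apply Fin.ext; simp; omega
    rw [this]
    exact gv_mem_W h hny hnu hz _ (by omega)

lemma degree_bound (hny : 1 ≤ ny) (hnu : 1 ≤ nu) (hz : h ⟨ny + nu - 1, Nat.sub_one_lt (by omega)⟩ ≠ 0)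
    (m : Polynomial ℝ) (hm : m.Monic) (h0 : aeval (F h) m = 0) :
    ny + nu ≤ m.natDegree := by
  set e₀ : Fin (ny + nu) → ℝ := ee ⟨ny - 1, by omega⟩ with he₀
  set d := m.natDegree with hd
  by_cases hd0 : d = 0
  · exfalso
    have hm1 : m = 1 := hm.natDegree_eq_zero.mp hd0
    rw [hm1, _root_.map_one] at h0
    have := congrFun (congrArg (fun g : Module.End ℝ (Fin (ny + nu) → ℝ) => g e₀) h0)
      ⟨ny - 1, by omega⟩
    simp [e₀, ee] at this
  -- the n-th power is a combination of lower powers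
  have hFd : (F h) ^ d = aeval (F h) ((X : Polynomial ℝ) ^ d - m) := by
    rw [map_sub, aeval_X_pow, h0, sub_zero]
  set r : Polynomial ℝ := (X : Polynomial ℝ) ^ d - m with hr
  have hrdeg : r = 0 ∨ r.natDegree < d := by
    by_cases h00 : r = 0
    · exact Or.inl h00
    · right
      have hdeg : r.degree < (d : WithBot ℕ) := by
        have := Polynomial.degree_sub_lt
          (p := (X : Polynomial ℝ) ^ d) (q := m)
          (by rw [Polynomial.degree_X_pow]
              exact (Polynomial.degree_eq_natDegree hm.ne_zero).symm)
          (pow_ne_zero d Polynomial.X_ne_zero)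
          (by rw [Polynomial.leadingCoeff_X_pow, hm.leadingCoeff])
        rwa [Polynomial.degree_X_pow] at this
      exact (Polynomial.natDegree_lt_iff_degree_lt h00).mpr hdeg
  set Wd : Submodule ℝ (Fin (ny + nu) → ℝ) :=
    Submodule.span ℝ (Set.range fun j : Fin d => ((F h) ^ (j : ℕ)) e₀) with hWd
  have hall : ∀ k : ℕ, ((F h) ^ k) e₀ ∈ Wd := by
    intro k
    induction k using Nat.strong_induction_on with
    | _ k ih =>
      by_cases hk : k < d
      · exact Submodule.subset_span ⟨⟨k, hk⟩, rfl⟩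
      · push_neg at hk
        have hksplit : (F h) ^ k = (F h) ^ (k - d) * (F h) ^ d := by
          rw [← pow_add]; congr 1; omega
        rw [hksplit, Module.End.mul_apply, hFd]
        rcases hrdeg with h00 | hlt
        · rw [h00, map_zero, LinearMap.zero_apply, map_zero]
          exact Submodule.zero_mem _
        · rw [Polynomial.aeval_eq_sum_range' hlt, LinearMap.coe_sum, Finset.sum_apply,
            map_sum]
          apply Submodule.sum_mem
          intro i hi
          simp only [Finset.mem_range] at hi
          rw [LinearMap.smul_apply, LinearMap.map_smul, ← Module.End.mul_apply, ← pow_add]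
          exact Submodule.smul_mem _ _ (ih (k - d + i) (by omega))
  have hWdtop : Wd = ⊤ := by
    rw [eq_top_iff, ← W_top h hny hnu hz]
    apply Submodule.span_le.mpr
    rintro _ ⟨k, rfl⟩
    exact hall k
  have hle := finrank_le_of_span_eq_top hWdtop
  rwa [Module.finrank_pi, Fintype.card_fin, Fintype.card_fin] at hle


lemma aeval_transpose {n : ℕ} (M : Matrix (Fin n) (Fin n) ℝ) (p : Polynomial ℝ) :
    aeval Mᵀ p = (aeval M p)ᵀ := by
  induction p using Polynomial.induction_on' with
  | add p q hp hq => rw [map_add, map_add, hp, hq, Matrix.transpose_add]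
  | monomial n a =>
    simp only [aeval_monomial, Algebra.algebraMap_eq_smul_one, smul_mul_assoc, one_mul]
    rw [Matrix.transpose_smul, Matrix.transpose_pow]

lemma F_eq_toLin (h : Fin (ny + nu) → ℝ) :
    F h = Matrix.toLinAlgEquiv' (sarxCompanion ny nu h)ᵀ := by
  apply LinearMap.ext
  intro v
  rw [Matrix.toLinAlgEquiv'_apply]
  rfl

lemma aeval_F (h : Fin (ny + nu) → ℝ) (p : Polynomial ℝ) :
    aeval (F h) p = Matrix.toLinAlgEquiv' (aeval ((sarxCompanion ny nu h)ᵀ) p) := by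
  rw [F_eq_toLin, aeval_algEquiv]
  rfl

lemma aeval_F_zero_iff (h : Fin (ny + nu) → ℝ) (p : Polynomial ℝ) :
    aeval (F h) p = 0 ↔ aeval (sarxCompanion ny nu h) p = 0 := by
  rw [aeval_F, aeval_transpose]
  constructor
  · intro hp
    have := (map_eq_zero_iff _ (Matrix.toLinAlgEquiv' (R := ℝ)
      (n := Fin (ny + nu))).injective).mp hp
    have h2 := congrArg Matrix.transpose this
    rwa [Matrix.transpose_transpose, Matrix.transpose_zero] at h2
  · intro hp
    rw [hp, Matrix.transpose_zero, map_zero]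

end Orbit
end SarxAux

/-- If `h^n ≠ 0`, the minimal polynomial of the SARX companion matrix equals its
characteristic polynomial, and both equal `z^{n_u} (z^{n_y} - Σ_{i=1}^{n_y} h^i z^{n_y-i})`. -/
theorem stmt9 (ny nu : ℕ) (hny : 1 ≤ ny) (hnu : 1 ≤ nu) (h : Fin (ny + nu) → ℝ)
    (hz : h ⟨ny + nu - 1, by omega⟩ ≠ 0) :
    minpoly ℝ (sarxCompanion ny nu h) =
      Polynomial.X ^ nu *
        (Polynomial.X ^ ny -
          ∑ i : Fin ny, Polynomial.C (h (Fin.castAdd nu i)) * Polynomial.X ^ (ny - 1 - (i : ℕ))) ∧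
    (sarxCompanion ny nu h).charpoly =
      Polynomial.X ^ nu *
        (Polynomial.X ^ ny -
          ∑ i : Fin ny, Polynomial.C (h (Fin.castAdd nu i)) * Polynomial.X ^ (ny - 1 - (i : ℕ))) := by
  set A := sarxCompanion ny nu h with hA
  set P : Polynomial ℝ := Polynomial.X ^ nu *
    (Polynomial.X ^ ny -
      ∑ i : Fin ny, Polynomial.C (h (Fin.castAdd nu i)) * Polynomial.X ^ (ny - 1 - (i : ℕ)))
    with hP
  have hPq : P = Polynomial.X ^ nu * SarxAux.qpoly ny nu h := rfl
  have hSdeg : (∑ i : Fin ny,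
      Polynomial.C (h (Fin.castAdd nu i)) * Polynomial.X ^ (ny - 1 - (i : ℕ))).degree
        < (ny : WithBot ℕ) := by
    apply lt_of_le_of_lt (Polynomial.degree_sum_le _ _)
    refine (Finset.sup_lt_iff (WithBot.bot_lt_coe ny)).mpr ?_
    intro i _
    refine lt_of_le_of_lt (Polynomial.degree_C_mul_X_pow_le _ _) ?_
    exact_mod_cast Nat.cast_lt.mpr (show ny - 1 - (i : ℕ) < ny by omega)
  have hqmonic : (SarxAux.qpoly ny nu h).Monic := Polynomial.monic_X_pow_sub (by
    exact_mod_cast hSdeg)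
  have hqdeg : (SarxAux.qpoly ny nu h).degree = (ny : WithBot ℕ) := by
    rw [SarxAux.qpoly]
    rw [Polynomial.degree_sub_eq_left_of_degree_lt
      (by rw [Polynomial.degree_X_pow]; exact_mod_cast hSdeg)]
    exact Polynomial.degree_X_pow ny
  have hqnat : (SarxAux.qpoly ny nu h).natDegree = ny :=
    Polynomial.natDegree_eq_of_degree_eq_some hqdeg
  have hPmonic : P.Monic := by
    rw [hPq]; exact (Polynomial.monic_X_pow nu).mul hqmonic
  have hPnat : P.natDegree = ny + nu := by
    rw [hPq, (Polynomial.monic_X_pow nu).natDegree_mul hqmonic, Polynomial.natDegree_X_pow,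
      hqnat]
    omega
  have hint : IsIntegral ℝ A := IsIntegral.of_finite ℝ A
  have hm_monic : (minpoly ℝ A).Monic := minpoly.monic hint
  have hPA : Polynomial.aeval A P = 0 := by
    rw [hPq]
    exact (SarxAux.aeval_F_zero_iff h _).mp (SarxAux.pF_zero h hny)
  have hdvd : minpoly ℝ A ∣ P := minpoly.dvd ℝ A hPA
  have hdeg_low : ny + nu ≤ (minpoly ℝ A).natDegree := by
    apply SarxAux.degree_bound h hny hnu hz _ hm_monic
    rw [SarxAux.aeval_F_zero_iff]
    exact minpoly.aeval ℝ A
  have hmP : minpoly ℝ A = P :=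
    Polynomial.eq_of_dvd_of_natDegree_le_of_leadingCoeff hdvd
      (by rw [hPnat]; exact hdeg_low)
      (by rw [hm_monic.leadingCoeff, hPmonic.leadingCoeff])
  have hchdvd : minpoly ℝ A ∣ A.charpoly := A.minpoly_dvd_charpoly
  rw [hmP] at hchdvd
  have hch : A.charpoly.natDegree = ny + nu := by
    rw [Matrix.charpoly_natDegree_eq_dim, Fintype.card_fin]
  have hchP : P = A.charpoly :=
    Polynomial.eq_of_dvd_of_natDegree_le_of_leadingCoeff hchdvd
      (by rw [hch, hPnat])
      (by rw [hPmonic.leadingCoeff, (A.charpoly_monic).leadingCoeff])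
  exact ⟨hmP, hchP.symm⟩
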